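/- Let ≤ be a total order on a commutative ring R with 1 making (R,<) a totally ordered ring, and assume R is dense and shrinkable. Let r ∈ R with r ≠ 1. Then: (1) if the sequence (r^n) converges in R, it converges to zero; (2) the geometric series Σ_{n=0}^{∞} r^n is convergent in R if and only if the sequence (r^n) converges to zero and 1−r is invertible in R, in which case the sum equals (1−r)^{-1}. -/

import Mathlib

/-- The absolute value `|a| = max a (-a)` in a linearly ordered ring. -/
def rAbs {R : Type*} [Ring R] [LinearOrder R] (a : R) : R := max a (-a)

/-- Convergence of a sequence in a linearly ordered ring w.r.t. `rAbs`. -/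
def rConv {R : Type*} [Ring R] [LinearOrder R] (u : ℕ → R) (l : R) : Prop :=
  ∀ ε : R, 0 < ε → ∃ N : ℕ, ∀ n ≥ N, rAbs (u n - l) < ε

/-- In a dense and shrinkable totally ordered commutative ring with `1`,
for `r ≠ 1`: (1) if `(r^n)` converges then it converges to zero; (2) the geometric
series `Σ r^n` converges iff `(r^n) → 0` and `1 - r` is invertible, and in that case
the sum is the inverse of `1 - r`. -/
theorem stmt_18 (R : Type*) [CommRing R] [LinearOrder R]
    (hadd : ∀ a b c : R, a < b → a + c < b + c)
    (hmul : ∀ a b c : R, a < b → 0 < c → a * c < b * c)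
    (hdense : ∀ ε : R, 0 < ε → ∃ β γ : R, 0 < β ∧ 0 < γ ∧ β + γ < ε)
    (hshrink : ∀ α M : R, 0 < α → 0 < M →
      ∃ αl αr : R, 0 < αl ∧ 0 < αr ∧ M * αr < α ∧ αl * M < α)
    (r : R) (hr : r ≠ 1) :
    (∀ l : R, rConv (fun n => r ^ n) l → l = 0) ∧
    ((∃ l : R, rConv (fun n => ∑ i ∈ Finset.range n, r ^ i) l) ↔
      (rConv (fun n => r ^ n) 0 ∧ IsUnit (1 - r))) ∧
    (∀ l : R, rConv (fun n => ∑ i ∈ Finset.range n, r ^ i) l → (1 - r) * l = 1) := by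
  -- the ring is nontrivial since `r ≠ 1`
  have h01 : (0 : R) ≠ 1 := by
    intro h
    haveI := subsingleton_of_zero_eq_one h
    exact hr (Subsingleton.elim _ _)
  -- `0 ≤ 1`
  have h0lt1 : (0 : R) < 1 := by
    rcases lt_trichotomy (0 : R) 1 with h | h | h
    · exact h
    · exact absurd h h01
    · -- 1 < 0, derive contradiction
      have h1 : (0 : R) < -1 := by
        have := hadd 1 0 (-1) h
        simpa using this
      have h2 := hmul 1 0 (-1) h h1
      simp only [one_mul, zero_mul] at h2
      exact absurd h2 (not_lt_of_gt h1)
  -- build a `LinearOrderedCommRing` instance from the hypotheses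
  haveI : IsOrderedAddMonoid R :=
    { add_le_add_left := by
        intro a b hab c
        rcases eq_or_lt_of_le hab with rfl | h
        · exact le_refl _
        · exact le_of_lt (hadd a b c h) }
  haveI : ZeroLEOneClass R := ⟨le_of_lt h0lt1⟩
  haveI : Nontrivial R := ⟨⟨0, 1, h01⟩⟩
  haveI : IsStrictOrderedRing R := IsStrictOrderedRing.of_mul_pos (fun a b ha hb => by
    have := hmul 0 a b ha hb
    simpa using this)
  have habs : ∀ a : R, rAbs a = |a| := fun a => (abs_eq_max_neg (a := a)).symm
  -- uniqueness of limits
  have huniq : ∀ (u : ℕ → R) (a b : R), rConv u a → rConv u b → a = b := by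
    intro u a b ha hb
    by_contra h
    have hpos : (0 : R) < |a - b| := abs_pos.mpr (sub_ne_zero.mpr h)
    obtain ⟨β, γ, hβ, hγ, hβγ⟩ := hdense _ hpos
    obtain ⟨N1, h1⟩ := ha β hβ
    obtain ⟨N2, h2⟩ := hb γ hγ
    have h1' := h1 (max N1 N2) (le_max_left _ _)
    have h2' := h2 (max N1 N2) (le_max_right _ _)
    rw [habs] at h1' h2'
    have : |a - b| < |a - b| := by
      calc |a - b| ≤ |a - u (max N1 N2)| + |u (max N1 N2) - b| := abs_sub_le _ _ _
      _ = |u (max N1 N2) - a| + |u (max N1 N2) - b| := by rw [abs_sub_comm]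
      _ < β + γ := add_lt_add h1' h2'
      _ < |a - b| := hβγ
    exact lt_irrefl _ this
  -- multiplication by a constant preserves convergence
  have hmulc : ∀ (c : R) (u : ℕ → R) (l : R), rConv u l →
      rConv (fun n => c * u n) (c * l) := by
    intro c u l h ε hε
    rcases eq_or_ne c 0 with rfl | hc
    · exact ⟨0, fun n _ => by simpa [rAbs] using hε⟩
    · obtain ⟨αl, αr, hαl, hαr, hMr, _⟩ := hshrink ε |c| hε (abs_pos.mpr hc)
      obtain ⟨N, hN⟩ := h αr hαr
      refine ⟨N, fun n hn => ?_⟩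
      have hN' := hN n hn
      rw [habs] at hN'
      rw [habs]
      calc |c * u n - c * l| = |c| * |u n - l| := by rw [← mul_sub, abs_mul]
      _ < |c| * αr := mul_lt_mul_of_pos_left hN' (abs_pos.mpr hc)
      _ < ε := hMr
  -- if a sequence of partial sums converges, the terms tend to zero
  have hterms : ∀ l : R, rConv (fun n => ∑ i ∈ Finset.range n, r ^ i) l →
      rConv (fun n => r ^ n) 0 := by
    intro l hl ε hε
    obtain ⟨β, γ, hβ, hγ, hβγ⟩ := hdense ε hε
    obtain ⟨N1, h1⟩ := hl β hβ
    obtain ⟨N2, h2⟩ := hl γ hγ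
    refine ⟨max N1 N2, fun n hn => ?_⟩
    have h1' := h1 (n + 1) (le_trans (le_trans (le_max_left _ _) hn) (Nat.le_succ n))
    have h2' := h2 n (le_trans (le_max_right _ _) hn)
    rw [habs] at h1' h2'
    rw [habs]
    have key : r ^ n - 0 = ((∑ i ∈ Finset.range (n+1), r ^ i) - l)
        - ((∑ i ∈ Finset.range n, r ^ i) - l) := by
      rw [Finset.sum_range_succ]; ring
    calc |r ^ n - 0|
        = |((∑ i ∈ Finset.range (n+1), r ^ i) - l) - ((∑ i ∈ Finset.range n, r ^ i) - l)| := by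
          rw [key]
      _ ≤ |(∑ i ∈ Finset.range (n+1), r ^ i) - l| + |(∑ i ∈ Finset.range n, r ^ i) - l| :=
          abs_sub (_ : R) _
      _ < β + γ := add_lt_add h1' h2'
      _ < ε := hβγ
  have h1r : (1 : R) - r ≠ 0 := sub_ne_zero.mpr (Ne.symm hr)
  -- part 3 core: limits of partial sums are inverses of 1 - r
  have hpart3 : ∀ l : R, rConv (fun n => ∑ i ∈ Finset.range n, r ^ i) l →
      (1 - r) * l = 1 := by
    intro l hl
    have h0 := hterms l hl
    have hA : rConv (fun n => (1 - r) * ∑ i ∈ Finset.range n, r ^ i) ((1 - r) * l) :=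
      hmulc _ _ _ hl
    have hB : rConv (fun n => (1 - r) * ∑ i ∈ Finset.range n, r ^ i) 1 := by
      intro ε hε
      obtain ⟨N, hN⟩ := h0 ε hε
      refine ⟨N, fun n hn => ?_⟩
      have hN' := hN n hn
      rw [habs] at hN' ⊢
      have hg := geom_sum_mul r n
      have : (1 - r) * (∑ i ∈ Finset.range n, r ^ i) - 1 = -(r ^ n - 0) := by
        linear_combination -hg
      rw [this, abs_neg]
      exact hN'
    exact huniq _ _ _ hA hB
  refine ⟨?_, ⟨?_, ?_⟩, hpart3⟩
  · -- part 1
    intro l hl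
    have hshift : rConv (fun n => r * r ^ n) l := by
      intro ε hε
      obtain ⟨N, hN⟩ := hl ε hε
      exact ⟨N, fun n hn => by
        have := hN (n + 1) (le_trans hn (Nat.le_succ n))
        simpa [pow_succ, mul_comm] using this⟩
    have hrl : r * l = l := huniq _ _ _ (hmulc r _ _ hl) hshift
    have : (1 - r) * l = 0 := by linear_combination -hrl
    rcases mul_eq_zero.mp this with h | h
    · exact absurd h h1r
    · exact h
  · -- forward direction of the iff
    rintro ⟨l, hl⟩
    exact ⟨hterms l hl, IsUnit.of_mul_eq_one _ (hpart3 l hl)⟩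
  · -- backward direction of the iff
    rintro ⟨h0, hu⟩
    obtain ⟨u, hu1⟩ := hu.exists_right_inv
    refine ⟨u, ?_⟩
    have hune : u ≠ 0 := by
      intro h
      rw [h, mul_zero] at hu1
      exact h01 hu1
    intro ε hε
    obtain ⟨αl, αr, hαl, hαr, hMr, _⟩ := hshrink ε |u| hε (abs_pos.mpr hune)
    obtain ⟨N, hN⟩ := h0 αr hαr
    refine ⟨N, fun n hn => ?_⟩
    have hN' := hN n hn
    rw [habs] at hN' ⊢
    have hg := geom_sum_mul r n
    have key : (∑ i ∈ Finset.range n, r ^ i) - u = -(u * (r ^ n - 0)) := by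
      linear_combination (-u) * hg - (∑ i ∈ Finset.range n, r ^ i) * hu1
    calc |(∑ i ∈ Finset.range n, r ^ i) - u| = |u| * |r ^ n - 0| := by
          rw [key, abs_neg, abs_mul]
      _ < |u| * αr := mul_lt_mul_of_pos_left hN' (abs_pos.mpr hune)
      _ < ε := hMr
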